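/- arXiv:1401.7091 — 2 statements merged into one kernel-verified Lean document; each statement's English description precedes it below -/
import Mathlib

section
/- Let D be a simple strongly connected digraph on n vertices. Then 2 ≤ q(D) ≤ 2(n−1); moreover q(D) = 2n−2 if and only if D is isomorphic to the complete digraph K_n^↔ (with both arcs between every pair of distinct vertices), and q(D) = 2 if and only if D is isomorphic to the directed cycle C_n^→ on n vertices. -/
open Matrix

namespace SignlessDigraph

variable {n : ℕ}

/-- Real adjacency matrix of a (multi)digraph on `Fin n`, given by arc multiplicities. -/
def adjMat (W : Fin n → Fin n → ℕ) : Matrix (Fin n) (Fin n) ℝ :=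
  fun i j => (W i j : ℝ)

/-- Outdegree of a vertex. -/
def outdeg (W : Fin n → Fin n → ℕ) (i : Fin n) : ℕ := ∑ j, W i j

/-- Indegree of a vertex. -/
def indeg (W : Fin n → Fin n → ℕ) (i : Fin n) : ℕ := ∑ j, W j i

/-- The signless Laplacian matrix `Q(D) = diag(outdegrees) + A(D)`. -/
noncomputable def Qmat (W : Fin n → Fin n → ℕ) : Matrix (Fin n) (Fin n) ℝ :=
  Matrix.diagonal (fun i => (outdeg W i : ℝ)) + adjMat W

/-- Spectral radius of a real matrix: the maximum modulus of its (complex) eigenvalues. -/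
noncomputable def radius (M : Matrix (Fin n) (Fin n) ℝ) : ℝ :=
  sSup {r : ℝ | ∃ μ ∈ spectrum ℂ (M.map ((↑) : ℝ → ℂ)), r = ‖μ‖}

/-- The signless Laplacian spectral radius `q(D)`. -/
noncomputable def q (W : Fin n → Fin n → ℕ) : ℝ := radius (Qmat W)

/-- The (adjacency) spectral radius `ρ(D)`. -/
noncomputable def rho (W : Fin n → Fin n → ℕ) : ℝ := radius (adjMat W)

/-- A digraph is simple: no loops and no multiple arcs. -/
def Simple (W : Fin n → Fin n → ℕ) : Prop :=
  (∀ i, W i i = 0) ∧ ∀ i j, W i j ≤ 1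

/-- Strong connectivity: every vertex is reachable from every vertex by a directed path. -/
def StronglyConnected (W : Fin n → Fin n → ℕ) : Prop :=
  ∀ i j : Fin n, Relation.ReflTransGen (fun a b => W a b ≠ 0) i j

/-- Isomorphism of digraphs on `Fin n`. -/
def Iso (W W' : Fin n → Fin n → ℕ) : Prop :=
  ∃ e : Fin n ≃ Fin n, ∀ i j, W (e i) (e j) = W' i j

/-- The clique number: maximum size of a set of vertices with all arcs in both directions. -/
noncomputable def cliqueNum (W : Fin n → Fin n → ℕ) : ℕ :=
  sSup {d : ℕ | ∃ s : Finset (Fin n), s.card = d ∧ ∀ i ∈ s, ∀ j ∈ s, i ≠ j → W i j ≠ 0}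

/-- `W` has a directed cycle of length `c`. -/
def HasCycleLen (W : Fin n → Fin n → ℕ) (c : ℕ) : Prop :=
  ∃ (hc : 2 ≤ c) (p : Fin c → Fin n), Function.Injective p ∧
    ∀ i : Fin c, W (p i) (p ⟨((i : ℕ) + 1) % c, Nat.mod_lt _ (by omega)⟩) ≠ 0

/-- The girth: length of a shortest directed cycle. -/
noncomputable def girth (W : Fin n → Fin n → ℕ) : ℕ := sInf {c | HasCycleLen W c}

/-- The complete digraph `K_n^↔`. -/
def Kcomp (n : ℕ) : Fin n → Fin n → ℕ := fun i j => if i = j then 0 else 1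

/-- The directed cycle `C_n^→`, with arcs `i → i+1 (mod n)`. -/
def cyc (n : ℕ) : Fin n → Fin n → ℕ := fun i j => if (j : ℕ) = ((i : ℕ) + 1) % n then 1 else 0

/-- The digraph `B_{n,d}` (for `2 ≤ d ≤ n-1`): a complete digraph on the vertices
`0, …, d-1` together with a directed path `0 → d → d+1 → ⋯ → n-1 → 1`
(the path `u_1 u_2 ⋯ u_{n-d+2}` with `u_1 = 0`, `u_{n-d+2} = 1`,
and internal vertices `d, …, n-1`). -/
def B (n d : ℕ) : Fin n → Fin n → ℕ := fun i j =>
  if i ≠ j ∧ (i : ℕ) < d ∧ (j : ℕ) < d then 1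
  else if (i : ℕ) = 0 ∧ (j : ℕ) = d then 1
  else if d ≤ (i : ℕ) ∧ (j : ℕ) = (i : ℕ) + 1 then 1
  else if (i : ℕ) = n - 1 ∧ (j : ℕ) = 1 then 1
  else 0

/-- `B'_{n,d} = B_{n,d} − (u_{n-d+1}, u_{n-d+2}) + (u_{n-d+1}, u_1)`, i.e. the arc
`n-1 → 1` is replaced by the arc `n-1 → 0`. -/
def B' (n d : ℕ) : Fin n → Fin n → ℕ := fun i j =>
  if (i : ℕ) = n - 1 ∧ (j : ℕ) = 1 then 0
  else if (i : ℕ) = n - 1 ∧ (j : ℕ) = 0 then 1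
  else B n d i j

/-- The digraph `C_{n,g}` (for `2 ≤ g ≤ n-1`): vertices `u_1, …, u_n` are `0, …, n-1`,
with arcs `i → i+1` for `0 ≤ i ≤ n-2` together with the arcs `g-1 → 0` and `n-1 → 0`. -/
def Cng (n g : ℕ) : Fin n → Fin n → ℕ := fun i j =>
  if (j : ℕ) = (i : ℕ) + 1 then 1
  else if ((i : ℕ) = g - 1 ∨ (i : ℕ) = n - 1) ∧ (j : ℕ) = 0 then 1
  else 0

/-- `C'_{n,g} = C_{n,g} − (u_n, u_1) + (u_n, u_g)`, i.e. the arc `n-1 → 0` is replaced by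
the arc `n-1 → g-1`. -/
def Cng' (n g : ℕ) : Fin n → Fin n → ℕ := fun i j =>
  if (i : ℕ) = n - 1 ∧ (j : ℕ) = 0 then 0
  else if (i : ℕ) = n - 1 ∧ (j : ℕ) = g - 1 then 1
  else Cng n g i j

/-- The θ-digraph `θ(a,b,c)` realized on `Fin n` (intended for `n = a + b + c + 2`):
vertex `0` is the common initial vertex of the paths `P_{a+2}`, `P_{b+2}` and terminal
vertex of `P_{c+2}`; vertex `1` is the common terminal vertex of `P_{a+2}`, `P_{b+2}`
and initial vertex of `P_{c+2}`; the internal vertices of the three paths are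
`2, …, a+1`, `a+2, …, a+b+1` and `a+b+2, …, a+b+c+1` respectively. -/
def theta (n a b c : ℕ) : Fin n → Fin n → ℕ := fun i j =>
  if ((a = 0 ∧ (i : ℕ) = 0 ∧ (j : ℕ) = 1) ∨
      (a ≠ 0 ∧ (((i : ℕ) = 0 ∧ (j : ℕ) = 2) ∨
        (2 ≤ (i : ℕ) ∧ (i : ℕ) ≤ a ∧ (j : ℕ) = (i : ℕ) + 1) ∨
        ((i : ℕ) = a + 1 ∧ (j : ℕ) = 1))) ∨
      (b = 0 ∧ (i : ℕ) = 0 ∧ (j : ℕ) = 1) ∨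
      (b ≠ 0 ∧ (((i : ℕ) = 0 ∧ (j : ℕ) = a + 2) ∨
        (a + 2 ≤ (i : ℕ) ∧ (i : ℕ) ≤ a + b ∧ (j : ℕ) = (i : ℕ) + 1) ∨
        ((i : ℕ) = a + b + 1 ∧ (j : ℕ) = 1))) ∨
      (c = 0 ∧ (i : ℕ) = 1 ∧ (j : ℕ) = 0) ∨
      (c ≠ 0 ∧ (((i : ℕ) = 1 ∧ (j : ℕ) = a + b + 2) ∨
        (a + b + 2 ≤ (i : ℕ) ∧ (i : ℕ) ≤ a + b + c ∧ (j : ℕ) = (i : ℕ) + 1) ∨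
        ((i : ℕ) = a + b + c + 1 ∧ (j : ℕ) = 0))))
  then 1 else 0

/-- The digraph `K→(n,k,m)`: the vertex set is partitioned into
`V₁ = {0,…,m-1}`, `S = {m,…,m+k-1}`, `V₂ = {m+k,…,n-1}`; it is the complete digraph
with all arcs from `V₂` to `V₁` removed. -/
def Kdir (n k m : ℕ) : Fin n → Fin n → ℕ := fun i j =>
  if i = j then 0
  else if m + k ≤ (i : ℕ) ∧ (j : ℕ) < m then 0
  else 1

/-- The digraph `D_{uv}` obtained from `D` by deleting the arc `(u,v)`, identifying `u`
with `v` (the merged vertex is `v`; the vertex `u` becomes isolated) and deleting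
multiple arcs (and loops). -/
def contract (W : Fin n → Fin n → ℕ) (u v : Fin n) : Fin n → Fin n → ℕ :=
  fun i j =>
    if i = u ∨ j = u ∨ i = j then 0
    else if i = v then min 1 (W v j + W u j)
    else if j = v then min 1 (W i v + W i u)
    else min 1 (W i j)

/-- The digraph `D^w` obtained from `D` by subdividing the arc `(u,v)` with a new
vertex `w` (realized as the last vertex of `Fin (n+1)`). -/
def subdivide (W : Fin n → Fin n → ℕ) (u v : Fin n) : Fin (n + 1) → Fin (n + 1) → ℕ :=
  fun i j =>
    if hi : (i : ℕ) < n then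
      if hj : (j : ℕ) < n then
        if (⟨(i : ℕ), hi⟩ : Fin n) = u ∧ (⟨(j : ℕ), hj⟩ : Fin n) = v then 0
        else W ⟨(i : ℕ), hi⟩ ⟨(j : ℕ), hj⟩
      else if (⟨(i : ℕ), hi⟩ : Fin n) = u then 1 else 0
    else
      if hj : (j : ℕ) < n then (if (⟨(j : ℕ), hj⟩ : Fin n) = v then 1 else 0)
      else 0


open Polynomial

section Aux

lemma eval_charpoly_eq (N : Matrix (Fin n) (Fin n) ℂ) (μ : ℂ) :
    N.charpoly.eval μ = (Matrix.scalar (Fin n) μ - N).det := by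
  rw [Matrix.charpoly, _root_.eval_det, Matrix.matPolyEquiv_charmatrix]
  simp

lemma algebraMap_matrix_eq (μ : ℂ) :
    algebraMap ℂ (Matrix (Fin n) (Fin n) ℂ) μ = Matrix.scalar (Fin n) μ := by
  rw [Matrix.algebraMap_eq_diagonal, Matrix.scalar_apply]
  simp

lemma mem_spectrum_iff_root (N : Matrix (Fin n) (Fin n) ℂ) (μ : ℂ) :
    μ ∈ spectrum ℂ N ↔ N.charpoly.IsRoot μ := by
  rw [spectrum.mem_iff, Matrix.isUnit_iff_isUnit_det, isUnit_iff_ne_zero, not_not,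
    Polynomial.IsRoot, eval_charpoly_eq, algebraMap_matrix_eq]

lemma mem_spectrum_iff_eig (N : Matrix (Fin n) (Fin n) ℂ) (μ : ℂ) :
    μ ∈ spectrum ℂ N ↔ ∃ v ≠ 0, N.mulVec v = μ • v := by
  rw [spectrum.mem_iff, Matrix.isUnit_iff_isUnit_det, isUnit_iff_ne_zero, not_not,
    ← Matrix.exists_mulVec_eq_zero_iff, algebraMap_matrix_eq]
  apply exists_congr; intro v
  apply and_congr_right; intro hv
  rw [Matrix.sub_mulVec, Matrix.scalar_apply, sub_eq_zero]
  constructor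
  · intro h; rw [← h]; simp
  · intro h; rw [h]; simp

/-- The set of eigenvalue moduli. -/
def rset (M : Matrix (Fin n) (Fin n) ℝ) : Set ℝ :=
  {r : ℝ | ∃ μ ∈ spectrum ℂ (M.map ((↑) : ℝ → ℂ)), r = ‖μ‖}

lemma radius_eq (M : Matrix (Fin n) (Fin n) ℝ) : radius M = sSup (rset M) := rfl

lemma charpoly_ne_zero (N : Matrix (Fin n) (Fin n) ℂ) : N.charpoly ≠ 0 :=
  (Matrix.charpoly_monic N).ne_zero

lemma rset_finite (M : Matrix (Fin n) (Fin n) ℝ) : (rset M).Finite := by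
  have h1 : (spectrum ℂ (M.map ((↑) : ℝ → ℂ))).Finite := by
    apply Set.Finite.subset (Polynomial.finite_setOf_isRoot
      (charpoly_ne_zero (M.map ((↑) : ℝ → ℂ))))
    intro μ hμ
    exact (mem_spectrum_iff_root _ μ).mp hμ
  have : rset M ⊆ (fun μ : ℂ => ‖μ‖) '' (spectrum ℂ (M.map ((↑) : ℝ → ℂ))) := by
    rintro r ⟨μ, hμ, rfl⟩
    exact ⟨μ, hμ, rfl⟩
  exact Set.Finite.subset (h1.image _) this

lemma rset_nonempty (hn : 0 < n) (M : Matrix (Fin n) (Fin n) ℝ) : (rset M).Nonempty := by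
  set N := M.map ((↑) : ℝ → ℂ) with hN
  have hdeg : 0 < N.charpoly.degree := by
    rw [Polynomial.degree_eq_natDegree (charpoly_ne_zero N), Matrix.charpoly_natDegree_eq_dim,
      Fintype.card_fin]
    exact_mod_cast hn
  obtain ⟨μ, hμ⟩ := Complex.exists_root hdeg
  exact ⟨‖μ‖, μ, (mem_spectrum_iff_root N μ).mpr hμ, rfl⟩

lemma radius_mem (hn : 0 < n) (M : Matrix (Fin n) (Fin n) ℝ) : radius M ∈ rset M :=
  Set.Nonempty.csSup_mem (rset_nonempty hn M) (rset_finite M)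

lemma radius_nonneg (hn : 0 < n) (M : Matrix (Fin n) (Fin n) ℝ) : 0 ≤ radius M := by
  obtain ⟨μ, _, h⟩ := radius_mem hn M
  rw [h]; positivity

lemma le_radius (M : Matrix (Fin n) (Fin n) ℝ) {x : ℝ} (hx : x ∈ rset M) : x ≤ radius M :=
  le_csSup (Set.Finite.bddAbove (rset_finite M)) hx

lemma abs_le_radius (M : Matrix (Fin n) (Fin n) ℝ) {μ : ℂ}
    (hμ : μ ∈ spectrum ℂ (M.map ((↑) : ℝ → ℂ))) : ‖μ‖ ≤ radius M :=
  le_radius M ⟨μ, hμ, rfl⟩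

lemma map_pow_eq (M : Matrix (Fin n) (Fin n) ℝ) (k : ℕ) :
    (M ^ k).map ((↑) : ℝ → ℂ) = (M.map ((↑) : ℝ → ℂ)) ^ k := by
  have : ∀ P : Matrix (Fin n) (Fin n) ℝ, P.map ((↑) : ℝ → ℂ)
      = (Complex.ofRealHom.mapMatrix : Matrix (Fin n) (Fin n) ℝ →+* _) P := fun _ => rfl
  rw [this, this, map_pow]

/-- Row-sum upper bound on eigenvalue moduli, via an eigenvector. -/
lemma abs_le_of_eig {A : Matrix (Fin n) (Fin n) ℝ} (h0 : ∀ i j, 0 ≤ A i j) {R : ℝ}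
    (hR : ∀ i, ∑ j, A i j ≤ R) {μ : ℂ} {v : Fin n → ℂ} (hv : v ≠ 0)
    (heig : (A.map ((↑) : ℝ → ℂ)).mulVec v = μ • v) : ‖μ‖ ≤ R := by
  have hne : (Finset.univ : Finset (Fin n)).Nonempty := by
    rcases Function.ne_iff.mp hv with ⟨i, -⟩
    exact ⟨i, Finset.mem_univ i⟩
  obtain ⟨i0, -, hi0⟩ := Finset.exists_max_image Finset.univ (fun j => ‖v j‖) hne
  have hvpos : 0 < ‖v i0‖ := by
    rcases Function.ne_iff.mp hv with ⟨i, hi⟩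
    exact lt_of_lt_of_le (by simpa using hi) (hi0 i (Finset.mem_univ i))
  have key : ‖μ‖ * ‖v i0‖ ≤ R * ‖v i0‖ := by
    have h1 : ‖μ * v i0‖ = ‖(A.map ((↑) : ℝ → ℂ)).mulVec v i0‖ := by
      rw [heig]; simp [Pi.smul_apply]
    calc ‖μ‖ * ‖v i0‖ = ‖μ * v i0‖ := (norm_mul _ _).symm
    _ = ‖∑ j, (A i0 j : ℂ) * v j‖ := by
        rw [h1]; rfl
    _ ≤ ∑ j, ‖(A i0 j : ℂ) * v j‖ := by
        exact
          norm_sum_le (Finset.univ : Finset (Fin n)) (fun j => (A i0 j : ℂ) * v j)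
    _ = ∑ j, A i0 j * ‖v j‖ := by
        apply Finset.sum_congr rfl; intro j _
        rw [norm_mul, Complex.norm_real, Real.norm_eq_abs, abs_of_nonneg (h0 i0 j)]
    _ ≤ ∑ j, A i0 j * ‖v i0‖ := by
        apply Finset.sum_le_sum; intro j _
        exact mul_le_mul_of_nonneg_left (hi0 j (Finset.mem_univ j)) (h0 i0 j)
    _ = (∑ j, A i0 j) * ‖v i0‖ := by rw [Finset.sum_mul]
    _ ≤ R * ‖v i0‖ := mul_le_mul_of_nonneg_right (hR i0) hvpos.le
  exact le_of_mul_le_mul_right key hvpos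

lemma pow_nonneg_entry {A : Matrix (Fin n) (Fin n) ℝ} (h0 : ∀ i j, 0 ≤ A i j) (k : ℕ) :
    ∀ i j, 0 ≤ (A ^ k) i j := by
  induction k with
  | zero => intro i j; by_cases h : i = j <;> simp [h, Matrix.one_apply]
  | succ k ih =>
      intro i j
      rw [pow_succ, Matrix.mul_apply]
      exact Finset.sum_nonneg fun l _ => mul_nonneg (ih i l) (h0 l j)

lemma rowsum_pow_le {A : Matrix (Fin n) (Fin n) ℝ} (h0 : ∀ i j, 0 ≤ A i j) {R : ℝ}
    (hR0 : 0 ≤ R) (hR : ∀ i, ∑ j, A i j ≤ R) (k : ℕ) :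
    ∀ i, ∑ j, (A ^ k) i j ≤ R ^ k := by
  induction k with
  | zero => intro i; simp [Matrix.one_apply]
  | succ k ih =>
      intro i
      have : ∀ j, (A ^ (k+1)) i j = ∑ l, A i l * (A ^ k) l j := by
        intro j; rw [pow_succ', Matrix.mul_apply]
      calc ∑ j, (A ^ (k+1)) i j = ∑ l, A i l * (∑ j, (A ^ k) l j) := by
            simp only [this, Finset.mul_sum]; rw [Finset.sum_comm]
      _ ≤ ∑ l, A i l * R ^ k := by
            apply Finset.sum_le_sum; intro l _
            exact mul_le_mul_of_nonneg_left (ih l) (h0 i l)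
      _ = (∑ l, A i l) * R ^ k := by rw [Finset.sum_mul]
      _ ≤ R * R ^ k := mul_le_mul_of_nonneg_right (hR i) (by positivity)
      _ = R ^ (k+1) := (pow_succ' R k).symm

lemma rowsum_pow_ge {A : Matrix (Fin n) (Fin n) ℝ} (h0 : ∀ i j, 0 ≤ A i j) {c : ℝ}
    (hc0 : 0 ≤ c) (hc : ∀ i, c ≤ ∑ j, A i j) (k : ℕ) :
    ∀ i, c ^ k ≤ ∑ j, (A ^ k) i j := by
  induction k with
  | zero => intro i; simp [Matrix.one_apply]
  | succ k ih =>
      intro i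
      have : ∀ j, (A ^ (k+1)) i j = ∑ l, A i l * (A ^ k) l j := by
        intro j; rw [pow_succ', Matrix.mul_apply]
      calc c ^ (k+1) = c * c ^ k := pow_succ' c k
      _ ≤ (∑ l, A i l) * c ^ k := mul_le_mul_of_nonneg_right (hc i) (by positivity)
      _ = ∑ l, A i l * c ^ k := by rw [Finset.sum_mul]
      _ ≤ ∑ l, A i l * (∑ j, (A ^ k) l j) := by
            apply Finset.sum_le_sum; intro l _
            exact mul_le_mul_of_nonneg_left (ih l) (h0 i l)
      _ = ∑ j, (A ^ (k+1)) i j := by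
            simp only [this, Finset.mul_sum]; rw [Finset.sum_comm]

lemma mulVec_pow_eig {N : Matrix (Fin n) (Fin n) ℂ} {μ : ℂ} {v : Fin n → ℂ}
    (heig : N.mulVec v = μ • v) (m : ℕ) : (N ^ m).mulVec v = μ ^ m • v := by
  induction m with
  | zero => simp
  | succ k ih =>
      rw [pow_succ', pow_succ', ← Matrix.mulVec_mulVec, ih, Matrix.mulVec_smul, heig,
        smul_smul, mul_comm]

/-- Eigenvector bound applied to powers. -/
lemma radius_pow_le (hn : 0 < n) {A : Matrix (Fin n) (Fin n) ℝ} (h0 : ∀ i j, 0 ≤ A i j)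
    {m : ℕ} {C : ℝ} (hC : ∀ i, ∑ j, (A ^ m) i j ≤ C) : radius A ^ m ≤ C := by
  obtain ⟨μ, hμ, hr⟩ := radius_mem hn A
  obtain ⟨v, hv, heig⟩ := (mem_spectrum_iff_eig _ μ).mp hμ
  have heig' : ((A ^ m).map ((↑) : ℝ → ℂ)).mulVec v = μ ^ m • v := by
    rw [map_pow_eq]; exact mulVec_pow_eig heig m
  have := abs_le_of_eig (pow_nonneg_entry h0 m) hC hv heig'
  rw [hr, ← norm_pow]
  exact this

/-- `|trace (A^p)| ≤ n * radius A ^ p` for `p > 0`. -/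
lemma abs_trace_pow_le (hn : 0 < n) (A : Matrix (Fin n) (Fin n) ℝ) {p : ℕ} (hp : 0 < p) :
    |Matrix.trace (A ^ p)| ≤ (n : ℝ) * radius A ^ p := by
  set N := A.map ((↑) : ℝ → ℂ) with hN
  have htr : Matrix.trace (N ^ p) = ((Matrix.trace (A ^ p) : ℝ) : ℂ) := by
    rw [hN, ← map_pow_eq]
    simp [Matrix.trace, Matrix.map_apply]
  have h1 : ‖Matrix.trace (N ^ p)‖ ≤ (n : ℝ) * radius A ^ p := by
    rw [Matrix.trace_eq_sum_roots_charpoly]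
    have hcard : Multiset.card (N ^ p).charpoly.roots = n := by
      rw [(Polynomial.splits_iff_card_roots).mp (IsAlgClosed.splits _),
        Matrix.charpoly_natDegree_eq_dim, Fintype.card_fin]
    have hroot : ∀ ν ∈ (N ^ p).charpoly.roots, ‖ν‖ ≤ radius A ^ p := by
      intro ν hν
      have hspec : ν ∈ spectrum ℂ (N ^ p) :=
        (mem_spectrum_iff_root _ ν).mpr ((Polynomial.mem_roots (charpoly_ne_zero _)).mp hν)
      rw [spectrum.map_pow_of_pos N hp] at hspec
      obtain ⟨μ, hμ, rfl⟩ := hspec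
      rw [norm_pow]
      exact pow_le_pow_left₀ (norm_nonneg μ) (abs_le_radius A hμ) p
    calc ‖(N ^ p).charpoly.roots.sum‖
        ≤ (((N ^ p).charpoly.roots).map (fun x => ‖x‖)).sum := by
          exact norm_multiset_sum_le ((N ^ p).charpoly.roots)
    _ ≤ Multiset.card (((N ^ p).charpoly.roots).map (fun x => ‖x‖)) • (radius A ^ p) := by
          apply Multiset.sum_le_card_nsmul
          intro x hx
          obtain ⟨ν, hν, rfl⟩ := Multiset.mem_map.mp hx
          exact hroot ν hν
    _ = (n : ℝ) * radius A ^ p := by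
          rw [Multiset.card_map, hcard, nsmul_eq_mul]
  calc |Matrix.trace (A ^ p)| = ‖((Matrix.trace (A ^ p) : ℝ) : ℂ)‖ := by
        rw [Complex.norm_real, Real.norm_eq_abs]
  _ = ‖Matrix.trace (N ^ p)‖ := by rw [htr]
  _ ≤ (n : ℝ) * radius A ^ p := h1

/-- Trace of a product as a double sum. -/
lemma trace_mul_entries (B C : Matrix (Fin n) (Fin n) ℝ) :
    Matrix.trace (B * C) = ∑ i, ∑ j, B i j * C j i := by
  simp [Matrix.trace, Matrix.mul_apply]

/-- Lower bound for the spectral radius of a nonnegative matrix with a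
strictly positive power. -/
lemma radius_pow_ge (hn : 2 ≤ n) {A : Matrix (Fin n) (Fin n) ℝ} (h0 : ∀ i j, 0 ≤ A i j)
    {δ : ℝ} (hδ : 0 < δ) (hδA : ∀ i j, δ ≤ (A ^ (n - 1)) i j)
    {m : ℕ} (hm : 0 < m) {c : ℝ} (hc0 : 0 < c) (hc : ∀ i, c ≤ ∑ j, (A ^ m) i j) :
    c ≤ radius A ^ m := by
  have hn0 : 0 < n := by omega
  set r := radius A with hr
  have hr0 : 0 ≤ r := radius_nonneg hn0 A
  -- the key trace inequality
  have key : ∀ k : ℕ, δ * (n : ℝ) * c ^ k ≤ (n : ℝ) * (r ^ (n - 1) * (r ^ m) ^ k) := by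
    intro k
    have hp : 0 < (n - 1) + m * k := by omega
    have htr : δ * (n : ℝ) * c ^ k ≤ Matrix.trace (A ^ ((n - 1) + m * k)) := by
      have hsplit : A ^ ((n - 1) + m * k) = A ^ (n - 1) * (A ^ m) ^ k := by
        rw [pow_add, pow_mul]
      rw [hsplit, trace_mul_entries]
      have hAm0 : ∀ i j, 0 ≤ ((A ^ m) ^ k) i j :=
        pow_nonneg_entry (pow_nonneg_entry h0 m) k
      have hrs : ∀ j, c ^ k ≤ ∑ i, ((A ^ m) ^ k) j i :=
        rowsum_pow_ge (pow_nonneg_entry h0 m) hc0.le hc k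
      calc δ * (n : ℝ) * c ^ k = δ * ∑ _j : Fin n, c ^ k := by
            rw [Finset.sum_const, Finset.card_univ, Fintype.card_fin, nsmul_eq_mul]; ring
      _ ≤ δ * ∑ j, ∑ i, ((A ^ m) ^ k) j i := by
            apply mul_le_mul_of_nonneg_left _ hδ.le
            apply Finset.sum_le_sum; intro j _; exact hrs j
      _ = ∑ i, ∑ j, δ * ((A ^ m) ^ k) j i := by
            rw [Finset.mul_sum]; simp_rw [Finset.mul_sum]; rw [Finset.sum_comm]
      _ ≤ ∑ i, ∑ j, (A ^ (n - 1)) i j * ((A ^ m) ^ k) j i := by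
            apply Finset.sum_le_sum; intro i _
            apply Finset.sum_le_sum; intro j _
            exact mul_le_mul_of_nonneg_right (hδA i j) (hAm0 j i)
    have habs := abs_trace_pow_le hn0 A hp
    calc δ * (n : ℝ) * c ^ k ≤ Matrix.trace (A ^ ((n - 1) + m * k)) := htr
    _ ≤ |Matrix.trace (A ^ ((n - 1) + m * k))| := le_abs_self _
    _ ≤ (n : ℝ) * r ^ ((n - 1) + m * k) := habs
    _ = (n : ℝ) * (r ^ (n - 1) * (r ^ m) ^ k) := by rw [pow_add, pow_mul]
  -- from k = 0 : δ ≤ r ^ (n-1), so r > 0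
  have h1 := key 0
  have hδr : δ ≤ r ^ (n - 1) := by
    have hnpos : (0 : ℝ) < (n : ℝ) := by exact_mod_cast hn0
    nlinarith [h1]
  have hrpos : 0 < r := by
    rcases eq_or_lt_of_le hr0 with h | h
    · exfalso
      rw [← h] at hδr
      rw [zero_pow (by omega : n - 1 ≠ 0)] at hδr
      linarith
    · exact h
  -- conclude
  by_contra hlt
  push_neg at hlt
  have hrm : 0 < r ^ m := by positivity
  have hgt1 : 1 < c / r ^ m := (one_lt_div hrm).mpr hlt
  obtain ⟨k, hk⟩ := pow_unbounded_of_one_lt (r ^ (n - 1) / δ) hgt1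
  have h2 := key k
  have hnpos : (0 : ℝ) < (n : ℝ) := by exact_mod_cast hn0
  have h3 : δ * c ^ k ≤ r ^ (n - 1) * (r ^ m) ^ k := by
    have := mul_le_mul_of_nonneg_left h2 (le_of_lt (by positivity : (0:ℝ) < ((n:ℝ))⁻¹))
    calc δ * c ^ k = ((n:ℝ))⁻¹ * (δ * (n : ℝ) * c ^ k) := by field_simp
    _ ≤ ((n:ℝ))⁻¹ * ((n : ℝ) * (r ^ (n - 1) * (r ^ m) ^ k)) := this
    _ = r ^ (n - 1) * (r ^ m) ^ k := by field_simp
  have h4 : (c / r ^ m) ^ k ≤ r ^ (n - 1) / δ := by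
    rw [div_pow, div_le_div_iff₀ (by positivity) hδ]
    calc c ^ k * δ = δ * c ^ k := by ring
    _ ≤ r ^ (n - 1) * (r ^ m) ^ k := h3
    _ = r ^ (n - 1) * (r ^ m) ^ k := rfl
  exact absurd (lt_of_lt_of_le hk h4) (lt_irrefl _)

/-- For a nonnegative matrix with positive diagonal whose positivity digraph is strongly
connected, the `(n-1)`-st power is entrywise positive. -/
lemma pow_pos_of_connected (hn : 2 ≤ n) {A : Matrix (Fin n) (Fin n) ℝ}
    (h0 : ∀ i j, 0 ≤ A i j) (hdiag : ∀ i, 0 < A i i)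
    (hconn : ∀ i j, Relation.ReflTransGen (fun a b => 0 < A a b) i j) :
    ∀ i j, 0 < (A ^ (n - 1)) i j := by
  intro i
  classical
  set s : ℕ → Finset (Fin n) :=
    fun k => Finset.univ.filter (fun j => 0 < (A ^ k) i j) with hs
  have hmem : ∀ k j, j ∈ s k ↔ 0 < (A ^ k) i j := by
    intro k j; simp [hs]
  have hstep : ∀ k j', j' ∈ s (k + 1) ↔ ∃ j ∈ s k, 0 < A j j' := by
    intro k j'
    rw [hmem]
    have hexp : (A ^ (k + 1)) i j' = ∑ l, (A ^ k) i l * A l j' := by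
      rw [pow_succ, Matrix.mul_apply]
    constructor
    · intro hpos
      by_contra hno
      push_neg at hno
      have : ∀ l, (A ^ k) i l * A l j' = 0 := by
        intro l
        by_cases hl : 0 < (A ^ k) i l
        · have := hno l ((hmem k l).mpr hl)
          have : A l j' = 0 := le_antisymm this (h0 l j')
          rw [this, mul_zero]
        · have : (A ^ k) i l = 0 := le_antisymm (not_lt.mp hl) (pow_nonneg_entry h0 k i l)
          rw [this, zero_mul]
      rw [hexp, Finset.sum_eq_zero (fun l _ => this l)] at hpos
      exact lt_irrefl 0 hpos
    · rintro ⟨j, hj, hjj'⟩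
      rw [hexp]
      apply Finset.sum_pos' (fun l _ => mul_nonneg (pow_nonneg_entry h0 k i l) (h0 l j'))
      exact ⟨j, Finset.mem_univ j, mul_pos ((hmem k j).mp hj) hjj'⟩
  have hmono : ∀ k, s k ⊆ s (k + 1) := by
    intro k j hj
    exact (hstep k j).mpr ⟨j, hj, hdiag j⟩
  have hmono' : ∀ k l, k ≤ l → s k ⊆ s l := by
    intro k l hkl
    induction l with
    | zero => have : k = 0 := by omega
              rw [this]
    | succ l ih =>
        rcases Nat.lt_or_ge k (l + 1) with h | h
        · exact (ih (by omega)).trans (hmono l)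
        · have : k = l + 1 := by omega
          rw [this]
  have hstab : ∀ k, s k = s (k + 1) → s (k + 1) = s (k + 2) := by
    intro k h
    ext j'
    rw [hstep, hstep, h]
  have hi0 : i ∈ s 0 := by
    rw [hmem]
    simp [Matrix.one_apply]
  have hP : ∀ k, s k = s (k + 1) ∨ k + 1 ≤ (s k).card := by
    intro k
    induction k with
    | zero => right; exact Finset.card_pos.mpr ⟨i, hi0⟩
    | succ k ih =>
        by_cases heq : s (k + 1) = s (k + 2)
        · exact Or.inl heq
        · right
          rcases ih with h | h
          · exact absurd (hstab k h) heq
          · by_cases heq' : s k = s (k + 1)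
            · exact absurd (hstab k heq') heq
            · have : s k ⊂ s (k + 1) := (Finset.ssubset_iff_of_subset (hmono k)).mpr
                (by rcases Finset.exists_of_ssubset (lt_of_le_of_ne (hmono k) heq') with ⟨x, hx, hx'⟩
                    exact ⟨x, hx, hx'⟩)
              have := Finset.card_lt_card this
              omega
  have huniv : s (n - 1) = Finset.univ := by
    rcases hP (n - 1) with h | h
    · -- stable, use closure under the relation
      have hclosed : ∀ j ∈ s (n - 1), ∀ j', 0 < A j j' → j' ∈ s (n - 1) := by
        intro j hj j' hjj'
        have : j' ∈ s (n - 1 + 1) := (hstep _ j').mpr ⟨j, hj, hjj'⟩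
        rwa [← h] at this
      apply Finset.eq_univ_of_forall
      intro j
      have hrt := hconn i j
      induction hrt with
      | refl => exact hmono' 0 (n - 1) (by omega) hi0
      | tail h1 h2 ih => exact hclosed _ ih _ h2
    · have h1 : (s (n - 1)).card ≤ n := le_of_le_of_eq (Finset.card_le_univ _)
        (by simp)
      have : (s (n - 1)).card = n := by omega
      exact Finset.eq_univ_of_card _ (by simpa using this)
  intro j
  exact (hmem (n - 1) j).mp (huniv ▸ Finset.mem_univ j)


end Aux

section Digraph

variable {W : Fin n → Fin n → ℕ}

lemma Qmat_apply (W : Fin n → Fin n → ℕ) (i j : Fin n) :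
    Qmat W i j = (if i = j then (outdeg W i : ℝ) else 0) + (W i j : ℝ) := by
  simp only [Qmat, adjMat, Matrix.add_apply, Matrix.diagonal]
  by_cases h : i = j <;> simp [h]

lemma Qmat_nonneg (W : Fin n → Fin n → ℕ) : ∀ i j, 0 ≤ Qmat W i j := by
  intro i j
  rw [Qmat_apply]
  positivity

lemma Qmat_rowsum (W : Fin n → Fin n → ℕ) (i : Fin n) :
    ∑ j, Qmat W i j = 2 * (outdeg W i : ℝ) := by
  simp only [Qmat_apply]
  rw [Finset.sum_add_distrib, Finset.sum_ite_eq Finset.univ i (fun _ => (outdeg W i : ℝ))]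
  simp only [Finset.mem_univ, if_true, outdeg]
  push_cast
  ring

lemma outdeg_pos (hn : 2 ≤ n) (hsc : StronglyConnected W) (i : Fin n) :
    1 ≤ outdeg W i := by
  have hex : ∃ j : Fin n, j ≠ i := by
    refine ⟨if i = ⟨0, by omega⟩ then ⟨1, by omega⟩ else ⟨0, by omega⟩, ?_⟩
    split_ifs with h
    · rw [h]; intro hc; exact absurd (congrArg Fin.val hc) (by simp)
    · intro hc; exact h hc.symm
  obtain ⟨j, hj⟩ := hex
  rcases (hsc i j).cases_head with h | ⟨c, hc, -⟩
  · exact absurd h.symm hj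
  · calc 1 ≤ W i c := Nat.one_le_iff_ne_zero.mpr hc
    _ ≤ outdeg W i := Finset.single_le_sum (fun l _ => Nat.zero_le _) (Finset.mem_univ c)

lemma Qmat_diag_pos (hn : 2 ≤ n) (hsc : StronglyConnected W) (i : Fin n) :
    0 < Qmat W i i := by
  rw [Qmat_apply, if_pos rfl]
  have h1 : (1 : ℝ) ≤ (outdeg W i : ℝ) := by exact_mod_cast outdeg_pos hn hsc i
  have h2 : (0 : ℝ) ≤ (W i i : ℝ) := by positivity
  linarith

lemma Qmat_conn (hsc : StronglyConnected W) :
    ∀ i j : Fin n, Relation.ReflTransGen (fun a b => 0 < Qmat W a b) i j := by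
  intro i j
  refine Relation.ReflTransGen.mono (fun a b hab => ?_) i j (hsc i j)
  have h1 : (1 : ℝ) ≤ (W a b : ℝ) := by exact_mod_cast Nat.one_le_iff_ne_zero.mpr hab
  rw [Qmat_apply]
  have h2 : (0 : ℝ) ≤ (if a = b then (outdeg W a : ℝ) else 0) := by positivity
  linarith

lemma exists_delta (hn : 2 ≤ n) (hsc : StronglyConnected W) :
    ∃ δ > 0, ∀ i j, δ ≤ ((Qmat W) ^ (n - 1)) i j := by
  have hpos := pow_pos_of_connected hn (Qmat_nonneg W) (Qmat_diag_pos hn hsc) (Qmat_conn hsc)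
  have hne : (Finset.univ : Finset (Fin n × Fin n)).Nonempty := by
    refine ⟨(⟨0, by omega⟩, ⟨0, by omega⟩), Finset.mem_univ _⟩
  obtain ⟨p0, -, hp0⟩ := Finset.exists_min_image Finset.univ
    (fun p : Fin n × Fin n => ((Qmat W) ^ (n - 1)) p.1 p.2) hne
  exact ⟨((Qmat W) ^ (n - 1)) p0.1 p0.2, hpos p0.1 p0.2,
    fun i j => hp0 (i, j) (Finset.mem_univ _)⟩

lemma outdeg_le (hW : Simple W) (i : Fin n) : outdeg W i ≤ n - 1 := by
  rw [outdeg, ← Finset.add_sum_erase _ _ (Finset.mem_univ i), hW.1 i, zero_add]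
  calc ∑ j ∈ Finset.univ.erase i, W i j ≤ ∑ _j ∈ Finset.univ.erase i, 1 :=
        Finset.sum_le_sum (fun j _ => hW.2 i j)
  _ = n - 1 := by
        rw [Finset.sum_const, smul_eq_mul, mul_one, Finset.card_erase_of_mem (Finset.mem_univ i)]
        simp

lemma q_le_main (hn : 2 ≤ n) (hW : Simple W) : q W ≤ 2 * ((n : ℝ) - 1) := by
  have hn0 : 0 < n := by omega
  have h := radius_pow_le (A := Qmat W) hn0 (Qmat_nonneg W) (m := 1)
    (C := 2 * ((n : ℝ) - 1)) ?_
  · simpa [pow_one, q] using h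
  · intro i
    rw [pow_one, Qmat_rowsum]
    have h1 : (outdeg W i : ℝ) ≤ (n : ℝ) - 1 := by
      have := outdeg_le hW i
      have h2 : (outdeg W i : ℝ) ≤ ((n - 1 : ℕ) : ℝ) := by exact_mod_cast this
      rwa [Nat.cast_sub (by omega), Nat.cast_one] at h2
    linarith

lemma two_le_q_main (hn : 2 ≤ n) (hsc : StronglyConnected W) : 2 ≤ q W := by
  obtain ⟨δ, hδ, hδA⟩ := exists_delta hn hsc
  have h := radius_pow_ge hn (Qmat_nonneg W) hδ hδA (m := 1) (by omega) (c := 2)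
    (by norm_num) ?_
  · simpa [pow_one, q] using h
  · intro i
    rw [pow_one, Qmat_rowsum]
    have h1 : (1 : ℝ) ≤ (outdeg W i : ℝ) := by exact_mod_cast outdeg_pos hn hsc i
    linarith

lemma rowsum_pow_n (hn : 2 ≤ n) (i : Fin n) :
    ∑ j, ((Qmat W) ^ n) i j = ∑ l, ((Qmat W) ^ (n - 1)) i l * (∑ j, Qmat W l j) := by
  have hsplit : (Qmat W) ^ n = (Qmat W) ^ (n - 1) * Qmat W := by
    rw [← pow_succ]
    congr 1
    omega
  rw [hsplit]
  simp only [Matrix.mul_apply]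
  rw [Finset.sum_comm]
  apply Finset.sum_congr rfl
  intro l _
  rw [Finset.mul_sum]

lemma q_lt_of_deficient (hn : 2 ≤ n) (hW : Simple W) (hsc : StronglyConnected W)
    {i0 : Fin n} (h0 : outdeg W i0 + 2 ≤ n) : q W < 2 * ((n : ℝ) - 1) := by
  obtain ⟨δ, hδ, hδA⟩ := exists_delta hn hsc
  set R : ℝ := 2 * ((n : ℝ) - 1) with hR
  have hRpos : 0 < R := by
    have : (2 : ℝ) ≤ (n : ℝ) := by exact_mod_cast hn
    rw [hR]; linarith
  have hRrow : ∀ l, ∑ j, Qmat W l j ≤ R := by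
    intro l
    rw [Qmat_rowsum]
    have h1 : (outdeg W l : ℝ) ≤ (n : ℝ) - 1 := by
      have h2 : (outdeg W l : ℝ) ≤ ((n - 1 : ℕ) : ℝ) := by exact_mod_cast outdeg_le hW l
      rwa [Nat.cast_sub (by omega), Nat.cast_one] at h2
    rw [hR]; linarith
  have hrow : ∀ i, ∑ j, ((Qmat W) ^ n) i j ≤ R ^ n - 2 * δ := by
    intro i
    rw [rowsum_pow_n hn]
    have ha0 : ∀ l, 0 ≤ ((Qmat W) ^ (n - 1)) i l := fun l => pow_nonneg_entry (Qmat_nonneg W) _ i l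
    calc ∑ l, ((Qmat W) ^ (n - 1)) i l * (∑ j, Qmat W l j)
        ≤ ∑ l, (((Qmat W) ^ (n - 1)) i l * R -
            (if l = i0 then 2 * ((Qmat W) ^ (n - 1)) i l else 0)) := by
          apply Finset.sum_le_sum
          intro l _
          by_cases hl : l = i0
          · subst hl
            rw [if_pos rfl]
            have hrow0 : ∑ j, Qmat W l j ≤ R - 2 := by
              rw [Qmat_rowsum]
              have h2 : (outdeg W l : ℝ) ≤ (n : ℝ) - 2 := by
                have h3 : (outdeg W l : ℝ) ≤ ((n - 2 : ℕ) : ℝ) := by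
                  exact_mod_cast (by omega : outdeg W l ≤ n - 2)
                rwa [Nat.cast_sub (by omega), Nat.cast_two] at h3
              rw [hR]; linarith
            nlinarith [ha0 l, hrow0]
          · rw [if_neg hl, sub_zero]
            exact mul_le_mul_of_nonneg_left (hRrow l) (ha0 l)
    _ = (∑ l, ((Qmat W) ^ (n - 1)) i l) * R - 2 * ((Qmat W) ^ (n - 1)) i i0 := by
          rw [Finset.sum_sub_distrib, ← Finset.sum_mul, Finset.sum_ite_eq' Finset.univ i0]
          simp
    _ ≤ R ^ (n - 1) * R - 2 * δ := by
          have h1 : ∑ l, ((Qmat W) ^ (n - 1)) i l ≤ R ^ (n - 1) :=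
            rowsum_pow_le (Qmat_nonneg W) hRpos.le hRrow (n - 1) i
          have h2 : δ ≤ ((Qmat W) ^ (n - 1)) i i0 := hδA i i0
          nlinarith
    _ = R ^ n - 2 * δ := by
          rw [← pow_succ]
          congr 2
          omega
  have hqn : q W ^ n ≤ R ^ n - 2 * δ :=
    radius_pow_le (by omega) (Qmat_nonneg W) hrow
  by_contra hcon
  push_neg at hcon
  have : R ^ n ≤ q W ^ n := pow_le_pow_left₀ hRpos.le hcon n
  linarith

lemma q_gt_of_big (hn : 2 ≤ n) (hW : Simple W) (hsc : StronglyConnected W)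
    {i1 : Fin n} (h1 : 2 ≤ outdeg W i1) : 2 < q W := by
  obtain ⟨δ, hδ, hδA⟩ := exists_delta hn hsc
  have hrow2 : ∀ l, (2 : ℝ) ≤ ∑ j, Qmat W l j := by
    intro l
    rw [Qmat_rowsum]
    have : (1 : ℝ) ≤ (outdeg W l : ℝ) := by exact_mod_cast outdeg_pos hn hsc l
    linarith
  have hrow : ∀ i, (2 : ℝ) ^ n + 2 * δ ≤ ∑ j, ((Qmat W) ^ n) i j := by
    intro i
    rw [rowsum_pow_n hn]
    have ha0 : ∀ l, 0 ≤ ((Qmat W) ^ (n - 1)) i l := fun l => pow_nonneg_entry (Qmat_nonneg W) _ i l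
    calc (2 : ℝ) ^ n + 2 * δ = 2 ^ (n - 1) * 2 + 2 * δ := by
          rw [← pow_succ]
          congr 2
          omega
    _ ≤ (∑ l, ((Qmat W) ^ (n - 1)) i l) * 2 + 2 * ((Qmat W) ^ (n - 1)) i i1 := by
          have hge : (2 : ℝ) ^ (n - 1) ≤ ∑ l, ((Qmat W) ^ (n - 1)) i l :=
            rowsum_pow_ge (Qmat_nonneg W) (by norm_num) hrow2 (n - 1) i
          have h2 : δ ≤ ((Qmat W) ^ (n - 1)) i i1 := hδA i i1
          nlinarith
    _ = ∑ l, (((Qmat W) ^ (n - 1)) i l * 2 +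
            (if l = i1 then 2 * ((Qmat W) ^ (n - 1)) i l else 0)) := by
          rw [Finset.sum_add_distrib, ← Finset.sum_mul, Finset.sum_ite_eq' Finset.univ i1]
          simp
    _ ≤ ∑ l, ((Qmat W) ^ (n - 1)) i l * (∑ j, Qmat W l j) := by
          apply Finset.sum_le_sum
          intro l _
          by_cases hl : l = i1
          · subst hl
            rw [if_pos rfl]
            have hrow4 : (4 : ℝ) ≤ ∑ j, Qmat W l j := by
              rw [Qmat_rowsum]
              have : (2 : ℝ) ≤ (outdeg W l : ℝ) := by exact_mod_cast h1
              linarith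
            nlinarith [ha0 l]
          · rw [if_neg hl, add_zero]
            exact mul_le_mul_of_nonneg_left (hrow2 l) (ha0 l)
  have hqn : (2 : ℝ) ^ n + 2 * δ ≤ q W ^ n :=
    radius_pow_ge hn (Qmat_nonneg W) hδ hδA (by omega) (by positivity) hrow
  by_contra hcon
  push_neg at hcon
  have : q W ^ n ≤ 2 ^ n := pow_le_pow_left₀ (radius_nonneg (by omega) _) hcon n
  linarith

end Digraph

section Charac

variable {W : Fin n → Fin n → ℕ}

lemma eq_Kcomp (hn : 2 ≤ n) (hW : Simple W) (hd : ∀ i, outdeg W i = n - 1) :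
    W = Kcomp n := by
  funext i j
  by_cases h : i = j
  · simp [Kcomp, h, hW.1 j]
  · have hsum : ∑ l ∈ Finset.univ.erase i, W i l = n - 1 := by
      have := hd i
      rwa [outdeg, ← Finset.add_sum_erase _ _ (Finset.mem_univ i), hW.1 i, zero_add] at this
    have hcard : (Finset.univ.erase i).card = n - 1 := by
      rw [Finset.card_erase_of_mem (Finset.mem_univ i)]
      simp
    have hzero : ∑ l ∈ Finset.univ.erase i, (1 - W i l) = 0 := by
      have hsplit : ∑ l ∈ Finset.univ.erase i, ((1 - W i l) + W i l)
          = ∑ l ∈ Finset.univ.erase i, 1 := by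
        apply Finset.sum_congr rfl
        intro l _
        have := hW.2 i l
        omega
      rw [Finset.sum_add_distrib] at hsplit
      rw [Finset.sum_const, smul_eq_mul, mul_one, hcard] at hsplit
      omega
    have hj : j ∈ Finset.univ.erase i := Finset.mem_erase.mpr ⟨fun hc => h hc.symm, Finset.mem_univ j⟩
    have := (Finset.sum_eq_zero_iff.mp hzero) j hj
    have h2 := hW.2 i j
    simp only [Kcomp, if_neg h]
    omega

lemma outdeg_eq_iso_Kcomp (hq : Iso W (Kcomp n)) : W = Kcomp n := by
  obtain ⟨e, he⟩ := hq
  funext i j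
  have h := he (e.symm i) (e.symm j)
  rw [e.apply_symm_apply, e.apply_symm_apply] at h
  rw [h]
  simp only [Kcomp]
  by_cases hij : i = j
  · simp [hij]
  · rw [if_neg (fun hc => hij (e.symm.injective hc)), if_neg hij]

lemma outdeg_Kcomp (i : Fin n) : outdeg (Kcomp n) i = n - 1 := by
  have hval : ∀ j, Kcomp n i j = if j ∈ Finset.univ.erase i then 1 else 0 := by
    intro j
    by_cases h : i = j
    · simp [Kcomp, h]
    · have h2 : j ≠ i := fun hc => h hc.symm
      simp [Kcomp, h, h2]
  rw [outdeg, Finset.sum_congr rfl (fun j _ => hval j), Finset.sum_ite_mem,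
    Finset.univ_inter, Finset.sum_const, smul_eq_mul, mul_one,
    Finset.card_erase_of_mem (Finset.mem_univ i)]
  simp

lemma outdeg_iso_cyc (hn : 2 ≤ n) (hq : Iso W (cyc n)) (i : Fin n) : outdeg W i = 1 := by
  obtain ⟨e, he⟩ := hq
  have h0 : outdeg W (e (e.symm i)) = outdeg W i := by rw [e.apply_symm_apply]
  rw [← h0, outdeg, ← Equiv.sum_comp e (fun j => W (e (e.symm i)) j)]
  simp only [he]
  set a := e.symm i
  have hlt : ((a : ℕ) + 1) % n < n := Nat.mod_lt _ (by omega)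
  calc ∑ j, cyc n a j = ∑ j, (if j = (⟨((a : ℕ) + 1) % n, hlt⟩ : Fin n) then 1 else 0) := by
        apply Finset.sum_congr rfl
        intro j _
        simp only [cyc]
        congr 1
        simp [Fin.ext_iff]
  _ = 1 := by rw [Finset.sum_ite_eq' Finset.univ]; simp

/-- If every outdegree is 1, a strongly connected digraph is a directed cycle. -/
lemma iso_cyc_of_outdeg_one (hn : 2 ≤ n) (hW : Simple W) (hsc : StronglyConnected W)
    (hd : ∀ i, outdeg W i = 1) : Iso W (cyc n) := by
  classical
  have huniq : ∀ i, ∃ j, W i j ≠ 0 ∧ ∀ j', W i j' ≠ 0 → j' = j := by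
    intro i
    have hsum : ∑ j, W i j = 1 := hd i
    have hex : ∃ j, W i j ≠ 0 := by
      by_contra h
      push_neg at h
      rw [Finset.sum_eq_zero (fun j _ => h j)] at hsum
      omega
    obtain ⟨j, hj⟩ := hex
    refine ⟨j, hj, ?_⟩
    intro j' hj'
    by_contra hne
    have hpair : W i j + W i j' ≤ ∑ l, W i l := by
      have : ({j, j'} : Finset (Fin n)).sum (W i) ≤ Finset.univ.sum (W i) :=
        Finset.sum_le_sum_of_subset (Finset.subset_univ _)
      rwa [Finset.sum_pair (fun hc => hne hc.symm)] at this
    omega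
  choose f hf hfu using huniq
  have hstep : ∀ a b, W a b ≠ 0 → b = f a := fun a b h => hfu a b h
  have hWf : ∀ a, W a (f a) = 1 := by
    intro a
    have h1 := hf a
    have h2 := hW.2 a (f a)
    omega
  set z : Fin n := ⟨0, by omega⟩ with hz
  have hreach : ∀ i j : Fin n, ∃ k, f^[k] i = j := by
    intro i j
    induction hsc i j with
    | refl => exact ⟨0, rfl⟩
    | tail h1 h2 ih =>
        obtain ⟨k, hk⟩ := ih
        refine ⟨k + 1, ?_⟩
        rw [Function.iterate_succ_apply', hk, ← hstep _ _ h2]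
  have hret : ∃ p, 0 < p ∧ f^[p] z = z := by
    obtain ⟨k, hk⟩ := hreach (f z) z
    exact ⟨k + 1, by omega, by rw [Function.iterate_succ_apply, hk]⟩
  set p := Nat.find hret with hp
  have hpspec : 0 < p ∧ f^[p] z = z := Nat.find_spec hret
  have hmul : ∀ a, f^[a * p] z = z := by
    intro a
    induction a with
    | zero => simp
    | succ a ih => rw [Nat.succ_mul, Function.iterate_add_apply, hpspec.2, ih]
  have hper : ∀ k, f^[k] z = f^[k % p] z := by
    intro k
    conv_lhs => rw [← Nat.mod_add_div k p]
    rw [Nat.mul_comm, Function.iterate_add_apply, hmul]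
  have hinj : ∀ a b, a < b → b < p → f^[a] z = f^[b] z → False := by
    intro a b hab hbp heq
    have h1 : f^[(p - b) + b] z = z := by
      rw [Nat.sub_add_cancel hbp.le]
      exact hpspec.2
    rw [Function.iterate_add_apply, ← heq, ← Function.iterate_add_apply] at h1
    have h2 : 0 < p - b + a ∧ f^[p - b + a] z = z := ⟨by omega, h1⟩
    exact Nat.find_min hret (by omega : p - b + a < p) h2
  have hple : p ≤ n := by
    have hinj2 : Function.Injective (fun a : Fin p => f^[(a : ℕ)] z) := by
      intro a b hab
      rcases lt_trichotomy (a : ℕ) (b : ℕ) with h | h | h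
      · exact (hinj _ _ h b.isLt hab).elim
      · exact Fin.ext h
      · exact (hinj _ _ h a.isLt hab.symm).elim
    simpa using Fintype.card_le_of_injective _ hinj2
  have hnle : n ≤ p := by
    have hsurj : Function.Surjective (fun a : Fin p => f^[(a : ℕ)] z) := by
      intro j
      obtain ⟨k, hk⟩ := hreach z j
      refine ⟨⟨k % p, Nat.mod_lt _ hpspec.1⟩, ?_⟩
      show f^[k % p] z = j
      rw [← hper k, hk]
    simpa using Fintype.card_le_of_surjective _ hsurj
  have hpn : p = n := le_antisymm hple hnle
  have hinj' : Function.Injective (fun i : Fin n => f^[(i : ℕ)] z) := by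
    intro a b hab
    have ha := a.isLt
    have hb := b.isLt
    rcases lt_trichotomy (a : ℕ) (b : ℕ) with h | h | h
    · exact (hinj _ _ h (by omega) hab).elim
    · exact Fin.ext h
    · exact (hinj _ _ h (by omega) hab.symm).elim
  refine ⟨Equiv.ofBijective _ (Finite.injective_iff_bijective.mp hinj'), ?_⟩
  intro i j
  set e := Equiv.ofBijective _ (Finite.injective_iff_bijective.mp hinj') with he
  have happ : ∀ i : Fin n, e i = f^[(i : ℕ)] z := fun _ => rfl
  have hlt : ((i : ℕ) + 1) % n < n := Nat.mod_lt _ (by omega)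
  have hkey : f (e i) = e ⟨((i : ℕ) + 1) % n, hlt⟩ := by
    have h1 : f (f^[(i : ℕ)] z) = f^[(i : ℕ) + 1] z := (Function.iterate_succ_apply' f _ z).symm
    rw [happ, happ, h1, hper ((i : ℕ) + 1), hpn]
  by_cases hc : (j : ℕ) = ((i : ℕ) + 1) % n
  · have hj : j = (⟨((i : ℕ) + 1) % n, hlt⟩ : Fin n) := Fin.ext hc
    rw [hj, ← hkey]
    simp only [cyc, if_pos hc]
    rw [hj] at hc
    exact hWf (e i)
  · simp only [cyc, if_neg hc]
    by_contra hne
    have := hstep _ _ hne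
    rw [hkey] at this
    have := e.injective this
    exact hc (congrArg Fin.val this)

end Charac

/-- For a simple strongly connected digraph `D` on `n` vertices,
`2 ≤ q(D) ≤ 2(n-1)`, with `q(D) = 2n-2` iff `D ≅ K_n^↔` and `q(D) = 2` iff `D ≅ C_n^→`. -/
theorem q_bounds_strongly_connected {n : ℕ} (hn : 2 ≤ n) (W : Fin n → Fin n → ℕ)
    (hW : Simple W) (hsc : StronglyConnected W) :
    2 ≤ q W ∧ q W ≤ 2 * ((n : ℝ) - 1) ∧
    (q W = 2 * (n : ℝ) - 2 ↔ Iso W (Kcomp n)) ∧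
    (q W = 2 ↔ Iso W (cyc n)) := by
  have hn0 : 0 < n := by omega
  have hA : 2 ≤ q W := two_le_q_main hn hsc
  have hB : q W ≤ 2 * ((n : ℝ) - 1) := q_le_main hn hW
  refine ⟨hA, hB, ?_, ?_⟩
  · constructor
    · intro hq
      have hd : ∀ i, outdeg W i = n - 1 := by
        intro i
        by_contra hne
        have hle := outdeg_le hW i
        have h0 : outdeg W i + 2 ≤ n := by omega
        have hlt := q_lt_of_deficient hn hW hsc h0
        rw [hq] at hlt
        linarith
      have heq := eq_Kcomp hn hW hd
      exact ⟨Equiv.refl _, fun i j => by rw [heq]; rfl⟩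
    · intro hiso
      have heq := outdeg_eq_iso_Kcomp hiso
      have hd : ∀ i, outdeg W i = n - 1 := by intro i; rw [heq]; exact outdeg_Kcomp i
      obtain ⟨δ, hδ, hδA⟩ := exists_delta hn hsc
      have hcast : (2 : ℝ) ≤ (n : ℝ) := by exact_mod_cast hn
      have hge := radius_pow_ge hn (Qmat_nonneg W) hδ hδA (m := 1) (by omega)
        (c := 2 * ((n : ℝ) - 1)) (by linarith) ?_
      · have h2 : 2 * ((n : ℝ) - 1) ≤ q W := by simpa [pow_one, q] using hge
        have h3 : q W ≤ 2 * (n : ℝ) - 2 := by linarith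
        have h4 : 2 * (n : ℝ) - 2 ≤ q W := by linarith
        exact le_antisymm h3 h4
      · intro i
        rw [pow_one, Qmat_rowsum, hd i, Nat.cast_sub (by omega), Nat.cast_one]
  · constructor
    · intro hq
      have hd : ∀ i, outdeg W i = 1 := by
        intro i
        by_contra hne
        have hge1 := outdeg_pos hn hsc i
        have h2 : 2 ≤ outdeg W i := by omega
        have hgt := q_gt_of_big hn hW hsc h2
        rw [hq] at hgt
        linarith
      exact iso_cyc_of_outdeg_one hn hW hsc hd
    · intro hiso
      have hd : ∀ i, outdeg W i = 1 := outdeg_iso_cyc hn hiso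
      have hub : q W ≤ 2 := by
        have h := radius_pow_le (A := Qmat W) hn0 (Qmat_nonneg W) (m := 1) (C := 2) ?_
        · simpa [pow_one, q] using h
        · intro i
          rw [pow_one, Qmat_rowsum, hd i]
          norm_num
      exact le_antisymm hub hA

end SignlessDigraph
end

section
/- Let D be a simple strongly connected digraph on n vertices, let u, v, w be vertices of D with (u,v) an arc of D, and let x = (x_1,…,x_n)^T be the unique positive unit eigenvector of Q(D) corresponding to q(D). Let H be the digraph (possibly with a multiple arc (u,w)) obtained from D by deleting the arc (u,v) and adding an arc (u,w). If x_w ≥ x_v, then q(H) ≥ q(D). Furthermore, if H is strongly connected and x_w > x_v, then q(H) > q(D). -/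
open Matrix

namespace SignlessDigraph

variable {n : ℕ}

open Filter
open scoped ENNReal NNReal Topology

attribute [local instance] Matrix.linftyOpNormedAddCommGroup Matrix.linftyOpNormedRing
  Matrix.linftyOpNormedAlgebra

lemma pow_entry_nonneg {M : Matrix (Fin n) (Fin n) ℝ} (hM : ∀ i j, 0 ≤ M i j) (k : ℕ) :
    ∀ i j, 0 ≤ (M ^ k) i j := by
  induction k with
  | zero => intro i j; rw [pow_zero]; by_cases h : i = j <;> simp [one_apply, h]
  | succ k ih =>
    intro i j
    rw [pow_succ, Matrix.mul_apply]
    exact Finset.sum_nonneg fun l _ => mul_nonneg (ih i l) (hM l j)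

lemma pow_mulVec_ge {M : Matrix (Fin n) (Fin n) ℝ} (hM : ∀ i j, 0 ≤ M i j)
    {x : Fin n → ℝ} (hx : ∀ i, 0 ≤ x i) {r : ℝ} (hr : 0 ≤ r)
    (h : ∀ i, r * x i ≤ (M *ᵥ x) i) (k : ℕ) : ∀ i, r ^ k * x i ≤ ((M ^ k) *ᵥ x) i := by
  induction k with
  | zero => intro i; simp [Matrix.one_mulVec]
  | succ k ih =>
    intro i
    have h1 : ((M ^ (k + 1)) *ᵥ x) i = (M *ᵥ ((M ^ k) *ᵥ x)) i := by
      rw [Matrix.mulVec_mulVec, ← pow_succ']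
    rw [h1, Matrix.mulVec]
    have h2 : ∀ j, M i j * (r ^ k * x j) ≤ M i j * ((M ^ k) *ᵥ x) j := fun j =>
      mul_le_mul_of_nonneg_left (ih j) (hM i j)
    calc r ^ (k + 1) * x i = r ^ k * (r * x i) := by ring
      _ ≤ r ^ k * (M *ᵥ x) i := by
          exact mul_le_mul_of_nonneg_left (h i) (pow_nonneg hr k)
      _ = ∑ j, M i j * (r ^ k * x j) := by
          rw [Matrix.mulVec, dotProduct, Finset.mul_sum]; congr 1; ext j; ring
      _ ≤ ∑ j, M i j * ((M ^ k) *ᵥ x) j := Finset.sum_le_sum (fun j _ => h2 j)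
      _ = dotProduct (M i) ((M ^ k) *ᵥ x) := rfl


lemma le_radius_of_mulVec_ge [NeZero n] {M : Matrix (Fin n) (Fin n) ℝ}
    (hM : ∀ i j, 0 ≤ M i j) {x : Fin n → ℝ} (hx : ∀ i, 0 < x i) {r : ℝ} (hr : 0 ≤ r)
    (h : ∀ i, r * x i ≤ (M *ᵥ x) i) : r ≤ radius M := by
  classical
  letI : CompleteSpace (Matrix (Fin n) (Fin n) ℂ) := FiniteDimensional.complete ℂ _
  set a : Matrix (Fin n) (Fin n) ℂ := M.map ((↑) : ℝ → ℂ) with ha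
  set S : Set ℝ := {s : ℝ | ∃ μ ∈ spectrum ℂ a, s = ‖μ‖} with hS
  have hbdd : BddAbove S := by
    refine ⟨‖a‖, fun s hs => ?_⟩
    obtain ⟨μ, hμ, rfl⟩ := hs
    simpa using spectrum.norm_le_norm_of_mem hμ
  have hne : S.Nonempty := by
    obtain ⟨μ, hμ⟩ := spectrum.nonempty a
    exact ⟨‖μ‖, μ, hμ, rfl⟩
  have hS0 : 0 ≤ sSup S := by
    obtain ⟨s, μ, hμ, rfl⟩ := hne
    exact le_trans (norm_nonneg μ) (le_csSup hbdd ⟨μ, hμ, rfl⟩)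
  set xc : Fin n → ℂ := fun i => (x i : ℂ) with hxc
  have i0 : Fin n := ⟨0, Nat.pos_of_ne_zero (NeZero.ne n)⟩
  have hX : 0 < ‖xc‖ := by
    refine norm_pos_iff.mpr fun hz => ?_
    have := congrFun hz i0
    simp only [hxc, Pi.zero_apply, Complex.ofReal_eq_zero] at this
    exact (hx i0).ne' this
  have hkey : ∀ k : ℕ, r ^ k * x i0 ≤ ‖a ^ k‖ * ‖xc‖ := by
    intro k
    have h1 : r ^ k * x i0 ≤ ((M ^ k) *ᵥ x) i0 := pow_mulVec_ge hM (fun i => (hx i).le) hr h k i0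
    have hmap : a ^ k = (M ^ k).map ((↑) : ℝ → ℂ) := by
      have : a = Complex.ofRealHom.mapMatrix M := rfl
      rw [this, ← map_pow]; rfl
    have h2 : ((a ^ k) *ᵥ xc) i0 = (((M ^ k) *ᵥ x) i0 : ℂ) := by
      rw [hmap]
      simp only [Matrix.mulVec, dotProduct, Matrix.map_apply, hxc]
      push_cast
      rfl
    calc r ^ k * x i0 ≤ ‖((a ^ k) *ᵥ xc) i0‖ := by
          rw [h2, Complex.norm_real, Real.norm_eq_abs]; exact h1.trans (le_abs_self _)
      _ ≤ ‖(a ^ k) *ᵥ xc‖ := norm_le_pi_norm _ i0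
      _ ≤ ‖a ^ k‖ * ‖xc‖ := Matrix.linfty_opNorm_mulVec _ _
  have hr' : ENNReal.ofReal r ≤ spectralRadius ℂ a := by
    rcases eq_or_lt_of_le hr with heq | hrpos
    · simp [← heq]
    set c : ℝ := x i0 / ‖xc‖ with hc
    have hc0 : 0 < c := div_pos (hx i0) hX
    have hle : ∀ᶠ k : ℕ in atTop,
        ENNReal.ofReal r * ENNReal.ofReal (c ^ (1/(k:ℝ))) ≤ (‖a ^ k‖₊ : ℝ≥0∞) ^ (1/(k:ℝ)) := by
      filter_upwards [eventually_ge_atTop 1] with k hk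
      have hreal : r ^ k * c ≤ ‖a ^ k‖ := by
        rw [show r ^ k * c = r ^ k * x i0 / ‖xc‖ by rw [hc]; ring, div_le_iff₀ hX]
        exact hkey k
      have h0 : ENNReal.ofReal (r ^ k * c) ≤ (‖a ^ k‖₊ : ℝ≥0∞) := by
        rw [← enorm_eq_nnnorm, ← ofReal_norm]
        exact ENNReal.ofReal_le_ofReal hreal
      have h1 : (ENNReal.ofReal (r ^ k * c)) ^ (1/(k:ℝ)) ≤ ((‖a ^ k‖₊ : ℝ≥0∞)) ^ (1/(k:ℝ)) :=
        ENNReal.rpow_le_rpow h0 (by positivity)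
      refine le_trans (le_of_eq ?_) h1
      rw [ENNReal.ofReal_mul (by positivity), ENNReal.mul_rpow_of_nonneg _ _ (by positivity),
        ENNReal.ofReal_pow hr, ← ENNReal.rpow_natCast (ENNReal.ofReal r) k,
        ← ENNReal.rpow_mul, mul_one_div_cancel (show ((k:ℝ)) ≠ 0 from Nat.cast_ne_zero.mpr (by omega)),
        ENNReal.rpow_one, ENNReal.ofReal_rpow_of_pos hc0]
    have htend : Tendsto (fun k : ℕ => ENNReal.ofReal r * ENNReal.ofReal (c ^ (1/(k:ℝ)))) atTop
        (𝓝 (ENNReal.ofReal r)) := by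
      have t1 : Tendsto (fun k : ℕ => c ^ (1/(k:ℝ))) atTop (𝓝 1) := by
        have := (Real.continuousAt_const_rpow (a := c) hc0.ne').tendsto.comp
          tendsto_one_div_atTop_nhds_zero_nat
        simpa [Function.comp_def, Real.rpow_zero] using this
      have t2 : Tendsto (fun k : ℕ => ENNReal.ofReal (c ^ (1/(k:ℝ)))) atTop (𝓝 1) := by
        have := (ENNReal.continuous_ofReal.tendsto 1).comp t1
        simpa [Function.comp_def] using this
      simpa using ENNReal.Tendsto.const_mul t2 (Or.inr ENNReal.ofReal_ne_top)
    exact le_of_tendsto_of_tendsto htend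
      (spectrum.pow_nnnorm_pow_one_div_tendsto_nhds_spectralRadius a) hle
  have h2 : spectralRadius ℂ a ≤ ENNReal.ofReal (sSup S) := by
    rw [spectralRadius]
    refine iSup₂_le fun μ hμ => ?_
    rw [← enorm_eq_nnnorm, ← ofReal_norm]
    exact ENNReal.ofReal_le_ofReal (le_csSup hbdd ⟨μ, hμ, rfl⟩)
  have hfin := le_trans hr' h2
  rw [ENNReal.ofReal_le_ofReal_iff hS0] at hfin
  exact hfin

lemma exists_pow_pos {M : Matrix (Fin n) (Fin n) ℝ} (hM : ∀ i j, 0 ≤ M i j)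
    (hconn : ∀ i j : Fin n, Relation.ReflTransGen (fun a b => 0 < M a b) i j) :
    ∃ N : ℕ, ∀ i j, 0 < ((1 + M) ^ N) i j := by
  classical
  set B : Matrix (Fin n) (Fin n) ℝ := 1 + M with hB
  have hB0 : ∀ i j, 0 ≤ B i j := by
    intro i j
    rw [hB, Matrix.add_apply]
    by_cases h : i = j <;> simp [Matrix.one_apply, h, hM i j] <;> linarith [hM j j]
  have hpow : ∀ k i j, 0 ≤ (B ^ k) i j := fun k => pow_entry_nonneg hB0 k
  have hstep : ∀ k i j, 0 < (B ^ k) i j → 0 < (B ^ (k + 1)) i j := by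
    intro k i j hij
    rw [pow_succ, Matrix.mul_apply]
    have hterm : 0 < (B ^ k) i j * B j j := by
      have : (1 : ℝ) ≤ B j j := by simp [hB, Matrix.add_apply, Matrix.one_apply, hM j j]
      nlinarith
    calc (0:ℝ) < (B ^ k) i j * B j j := hterm
      _ ≤ ∑ l, (B ^ k) i l * B l j :=
        Finset.single_le_sum (f := fun l => (B ^ k) i l * B l j)
          (fun l _ => mul_nonneg (hpow k i l) (hB0 l j)) (Finset.mem_univ j)
  have hedge : ∀ k i l j, 0 < (B ^ k) i l → 0 < M l j → 0 < (B ^ (k + 1)) i j := by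
    intro k i l j hil hlj
    rw [pow_succ, Matrix.mul_apply]
    have hBlj : 0 < B l j := by
      rw [hB, Matrix.add_apply]
      have : (0:ℝ) ≤ (1 : Matrix (Fin n) (Fin n) ℝ) l j := by
        by_cases h : l = j <;> simp [Matrix.one_apply, h]
      linarith
    calc (0:ℝ) < (B ^ k) i l * B l j := mul_pos hil hBlj
      _ ≤ ∑ m, (B ^ k) i m * B m j :=
        Finset.single_le_sum (f := fun m => (B ^ k) i m * B m j)
          (fun m _ => mul_nonneg (hpow k i m) (hB0 m j)) (Finset.mem_univ l)
  have hmono : ∀ i j k m, k ≤ m → 0 < (B ^ k) i j → 0 < (B ^ m) i j := by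
    intro i j k m hkm
    induction m, hkm using Nat.le_induction with
    | base => exact id
    | succ m _ ih => exact fun h => hstep m i j (ih h)
  have hreach : ∀ i j, ∃ k, 0 < (B ^ k) i j := by
    intro i j
    induction hconn i j with
    | refl => exact ⟨0, by simp [pow_zero, Matrix.one_apply]⟩
    | tail _ hbc ih =>
      obtain ⟨k, hk⟩ := ih
      exact ⟨k + 1, hedge k _ _ _ hk hbc⟩
  choose f hf using fun i => hreach i
  refine ⟨Finset.univ.sup fun i => Finset.univ.sup (f i), fun i j => ?_⟩
  refine hmono i j (f i j) _ ?_ (hf i j)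
  exact le_trans (Finset.le_sup (Finset.mem_univ j))
    (Finset.le_sup (f := fun i => Finset.univ.sup (f i)) (Finset.mem_univ i))

lemma lt_radius_of_mulVec_lt [NeZero n] {M : Matrix (Fin n) (Fin n) ℝ}
    (hM : ∀ i j, 0 ≤ M i j) {x : Fin n → ℝ} (hx : ∀ i, 0 < x i) {r : ℝ} (hr : 0 ≤ r)
    (h : ∀ i, r * x i ≤ (M *ᵥ x) i) (u : Fin n) (hu : r * x u < (M *ᵥ x) u)
    (hconn : ∀ i j : Fin n, Relation.ReflTransGen (fun a b => 0 < M a b) i j) :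
    r < radius M := by
  classical
  obtain ⟨N, hP⟩ := exists_pow_pos hM hconn
  set P : Matrix (Fin n) (Fin n) ℝ := (1 + M) ^ N with hPdef
  set z : Fin n → ℝ := P *ᵥ x with hz
  have hzpos : ∀ i, 0 < z i := by
    intro i
    rw [hz, Matrix.mulVec, dotProduct]
    exact Finset.sum_pos (fun j _ => mul_pos (hP i j) (hx j)) Finset.univ_nonempty
  have hcomm : M * P = P * M := by
    have : Commute M (1 + M) := (Commute.one_right M).add_right (Commute.refl M)
    exact (this.pow_right N).eq
  have hMz : ∀ i, r * z i < (M *ᵥ z) i := by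
    intro i
    have h1 : (M *ᵥ z) i = (P *ᵥ (M *ᵥ x)) i := by
      rw [hz, Matrix.mulVec_mulVec, Matrix.mulVec_mulVec, hcomm]
    have h2 : (M *ᵥ z) i - r * z i = ∑ j, P i j * ((M *ᵥ x) j - r * x j) := by
      rw [h1, hz, Matrix.mulVec, Matrix.mulVec, dotProduct, dotProduct, Finset.mul_sum,
        ← Finset.sum_sub_distrib]
      congr 1; ext j; ring
    have h3 : (0:ℝ) < ∑ j, P i j * ((M *ᵥ x) j - r * x j) := by
      have hterm : 0 < P i u * ((M *ᵥ x) u - r * x u) := mul_pos (hP i u) (by linarith)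
      calc (0:ℝ) < P i u * ((M *ᵥ x) u - r * x u) := hterm
        _ ≤ ∑ j, P i j * ((M *ᵥ x) j - r * x j) :=
          Finset.single_le_sum (f := fun j => P i j * ((M *ᵥ x) j - r * x j))
            (fun j _ => mul_nonneg (hP i j).le (by linarith [h j])) (Finset.mem_univ u)
    linarith [h2, h3]
  set r' : ℝ := Finset.univ.inf' Finset.univ_nonempty (fun i => (M *ᵥ z) i / z i) with hr'
  have hrr' : r < r' := by
    rw [hr', Finset.lt_inf'_iff]
    intro i _
    rw [lt_div_iff₀ (hzpos i)]
    linarith [hMz i]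
  have hr'le : ∀ i, r' * z i ≤ (M *ᵥ z) i := by
    intro i
    have : r' ≤ (M *ᵥ z) i / z i := Finset.inf'_le _ (Finset.mem_univ i)
    calc r' * z i ≤ ((M *ᵥ z) i / z i) * z i := by
          exact mul_le_mul_of_nonneg_right this (hzpos i).le
      _ = (M *ᵥ z) i := div_mul_cancel₀ _ (hzpos i).ne'
  exact lt_of_lt_of_le hrr' (le_radius_of_mulVec_ge hM hzpos (le_trans hr hrr'.le) hr'le)

/-- Rotating an arc `(u,v)` to `(u,w)` (possibly creating a multiple arc
`(u,w)`): if `x_w ≥ x_v` then `q(H) ≥ q(D)`; if moreover `H` is strongly connected and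
`x_w > x_v` then `q(H) > q(D)`, where `x` is the positive unit eigenvector of `Q(D)`
corresponding to `q(D)`. -/
theorem q_arc_rotation {n : ℕ} (W : Fin n → Fin n → ℕ) (hW : Simple W)
    (hsc : StronglyConnected W) (u v w : Fin n) (huv : W u v ≠ 0)
    (x : Fin n → ℝ) (hxpos : ∀ i, 0 < x i) (hxunit : ∑ i, (x i) ^ 2 = 1)
    (hxeig : Qmat W *ᵥ x = q W • x)
    (H : Fin n → Fin n → ℕ)
    (hH : ∀ i j, H i j =
      W i j + (if i = u ∧ j = w then 1 else 0) - (if i = u ∧ j = v then 1 else 0)) :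
    (x v ≤ x w → q W ≤ q H) ∧ (StronglyConnected H → x v < x w → q W < q H) := by
  classical
  haveI : NeZero n := ⟨u.pos.ne'⟩
  have hQentry : ∀ (A : Fin n → Fin n → ℕ) (i j : Fin n),
      Qmat A i j = (if i = j then (outdeg A i : ℝ) else 0) + (A i j : ℝ) := by
    intro A i j
    rw [Qmat, Matrix.add_apply, Matrix.diagonal_apply, adjMat]
  have hQWnn : ∀ i j, 0 ≤ Qmat W i j := by
    intro i j; rw [hQentry]; split_ifs <;> positivity
  have hQHnn : ∀ i j, 0 ≤ Qmat H i j := by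
    intro i j; rw [hQentry]; split_ifs <;> positivity
  have hxval : ∀ i, (Qmat W *ᵥ x) i = q W * x i := by
    intro i
    have := congrFun hxeig i
    simpa using this
  have hq0 : 0 ≤ q W := by
    have h1 : 0 ≤ (Qmat W *ᵥ x) u := by
      rw [Matrix.mulVec, dotProduct]
      exact Finset.sum_nonneg fun j _ => mul_nonneg (hQWnn u j) (hxpos j).le
    rw [hxval u] at h1
    nlinarith [hxpos u]
  have hWuv : 1 ≤ W u v := Nat.one_le_iff_ne_zero.mpr huv
  have HWcast : ∀ i j, (H i j : ℝ) =
      (W i j : ℝ) + (if i = u ∧ j = w then 1 else 0) - (if i = u ∧ j = v then 1 else 0) := by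
    intro i j
    rw [hH i j]
    have key : (if i = u ∧ j = v then 1 else 0) ≤ W i j + (if i = u ∧ j = w then 1 else 0) := by
      split_ifs with h1 h2 <;> try omega
      all_goals (obtain ⟨rfl, rfl⟩ := h1; omega)
    rw [Nat.cast_sub key]
    push_cast
    congr 1 <;> split_ifs <;> simp
  have hsum : ∀ (i : Fin n) (t : Fin n),
      (∑ j, (if i = u ∧ j = t then (1:ℝ) else 0)) = if i = u then 1 else 0 := by
    intro i t
    by_cases hi : i = u <;> simp [hi]
  have hsumx : ∀ (i : Fin n) (t : Fin n),
      (∑ j, (if i = u ∧ j = t then (1:ℝ) else 0) * x j) = if i = u then x t else 0 := by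
    intro i t
    by_cases hi : i = u <;> simp [hi]
  have houtdeg : ∀ i, (outdeg H i : ℝ) = (outdeg W i : ℝ) := by
    intro i
    rw [outdeg, outdeg]
    push_cast
    calc (∑ j, (H i j : ℝ))
        = ∑ j, ((W i j : ℝ) + (if i = u ∧ j = w then 1 else 0)
            - (if i = u ∧ j = v then 1 else 0)) :=
          Finset.sum_congr rfl fun j _ => HWcast i j
      _ = (∑ j, (W i j : ℝ)) + (if i = u then 1 else 0) - (if i = u then 1 else 0) := by
          rw [Finset.sum_sub_distrib, Finset.sum_add_distrib, hsum i w, hsum i v]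
      _ = ∑ j, (W i j : ℝ) := by ring
  have hQHx : ∀ i, (Qmat H *ᵥ x) i = q W * x i + (if i = u then x w - x v else 0) := by
    intro i
    have e2 : ∀ j, Qmat H i j = Qmat W i j
        + (if i = u ∧ j = w then 1 else 0) - (if i = u ∧ j = v then 1 else 0) := by
      intro j
      rw [hQentry H, hQentry W, HWcast i j]
      have : (if i = j then (outdeg H i : ℝ) else 0) = if i = j then (outdeg W i : ℝ) else 0 := by
        rw [houtdeg i]
      rw [this]; ring
    have e1 : (Qmat H *ᵥ x) i = ∑ j, Qmat H i j * x j := rfl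
    have e1' : (Qmat W *ᵥ x) i = ∑ j, Qmat W i j * x j := rfl
    rw [e1]
    calc (∑ j, Qmat H i j * x j)
        = ∑ j, (Qmat W i j * x j + (if i = u ∧ j = w then 1 else 0) * x j
            - (if i = u ∧ j = v then 1 else 0) * x j) := by
          refine Finset.sum_congr rfl fun j _ => ?_
          rw [e2 j]; ring
      _ = (∑ j, Qmat W i j * x j) + (if i = u then x w else 0) - (if i = u then x v else 0) := by
          rw [Finset.sum_sub_distrib, Finset.sum_add_distrib, hsumx i w, hsumx i v]
      _ = q W * x i + (if i = u then x w - x v else 0) := by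
          rw [← e1', hxval i]
          by_cases hi : i = u <;> simp [hi] <;> ring
  constructor
  · intro hvw
    refine le_radius_of_mulVec_ge hQHnn hxpos hq0 fun i => ?_
    rw [hQHx i]
    have : (0:ℝ) ≤ if i = u then x w - x v else 0 := by
      split_ifs <;> [linarith; rfl]
    linarith
  · intro hscH hvw
    have hconn : ∀ i j : Fin n, Relation.ReflTransGen (fun a b => 0 < Qmat H a b) i j := by
      intro i j
      refine Relation.ReflTransGen.mono (fun a b hab => ?_) i j (hscH i j)
      have h1 : (1:ℝ) ≤ (H a b : ℝ) := by exact_mod_cast Nat.one_le_iff_ne_zero.mpr hab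
      have h2 : (0:ℝ) ≤ if a = b then (outdeg H a : ℝ) else 0 := by split_ifs <;> positivity
      rw [hQentry H]
      linarith
    refine lt_radius_of_mulVec_lt hQHnn hxpos hq0 (fun i => ?_) u ?_ hconn
    · rw [hQHx i]
      have : (0:ℝ) ≤ if i = u then x w - x v else 0 := by
        split_ifs <;> [linarith; rfl]
      linarith
    · rw [hQHx u, if_pos rfl]
      linarith

end SignlessDigraph
end
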